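/- arXiv:2105.07555 — 2 statements merged into one kernel-verified Lean document; each statement's English description precedes it below -/
import Mathlib

section
/- Suppose X and Y are real-valued random variables whose conditional distribution functions F_{X|Z}(·|z) and F_{Y|Z}(·|z) are continuous for every value z of Z, and Z has continuous distribution function F_Z. Then for any strictly monotone functions m₁, m₂, m₃ : ℝ → ℝ, ρ(m₁(X), m₂(Y) | m₃(Z)) = ρ(X, Y | Z). -/
open MeasureTheory ProbabilityTheory Real Set

/-- `S₀(a,b) = e^{-|a−b|} + e^{-a} + e^{a−1} + e^{-b} + e^{b−1} + 2e^{-1} − 4`. -/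
noncomputable def S₀ (a b : ℝ) : ℝ :=
  Real.exp (-|a - b|) + Real.exp (-a) + Real.exp (a - 1) +
    Real.exp (-b) + Real.exp (b - 1) + 2 * Real.exp (-1) - 4

lemma abs_one_sub_sub (a b : ℝ) : |(1 - a) - (1 - b)| = |a - b| := by
  have h : (1 - a) - (1 - b) = b - a := by ring
  rw [h, abs_sub_comm]

lemma S₀_flip (a b : ℝ) : S₀ (1 - a) (1 - b) = S₀ a b := by
  unfold S₀
  rw [abs_one_sub_sub]
  have h1 : -(1 - a) = a - 1 := by ring
  have h2 : (1 - a) - 1 = -a := by ring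
  have h3 : -(1 - b) = b - 1 := by ring
  have h4 : (1 - b) - 1 = -b := by ring
  rw [h1, h2, h3, h4]
  ring

lemma measurable_condCDF_prod (ρ : Measure (ℝ × ℝ)) :
    Measurable fun p : ℝ × ℝ => condCDF ρ p.1 p.2 := by
  have hrep : ∀ p : ℝ × ℝ, condCDF ρ p.1 p.2
      = ⨅ q : ℚ, if p.2 < (q : ℝ) then condCDF ρ p.1 q else 1 := by
    intro p
    have hbdd : BddBelow (range fun q : ℚ => if p.2 < (q : ℝ) then condCDF ρ p.1 q else 1) := by
      refine ⟨0, ?_⟩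
      rintro y ⟨q, rfl⟩
      dsimp only
      split_ifs
      · exact condCDF_nonneg _ _ _
      · exact zero_le_one
    refine le_antisymm ?_ ?_
    · refine le_ciInf fun q => ?_
      split_ifs with h
      · exact (condCDF ρ p.1).mono h.le
      · exact condCDF_le_one _ _ _
    · rw [← StieltjesFunction.iInf_rat_gt_eq (condCDF ρ p.1) p.2]
      haveI : Nonempty { r' : ℚ // p.2 < (r' : ℝ) } := by
        obtain ⟨q, hq⟩ := exists_rat_gt p.2
        exact ⟨⟨q, hq⟩⟩
      refine le_ciInf fun r => ?_
      refine ciInf_le_of_le hbdd (r : ℚ) ?_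
      rw [if_pos r.2]
  have : (fun p : ℝ × ℝ => condCDF ρ p.1 p.2)
      = fun p : ℝ × ℝ => ⨅ q : ℚ, if p.2 < (q : ℝ) then condCDF ρ p.1 q else 1 :=
    funext hrep
  rw [this]
  refine Measurable.iInf fun q => Measurable.ite ?_ ?_ measurable_const
  · exact measurableSet_lt measurable_snd measurable_const
  · exact (measurable_condCDF ρ q).comp measurable_fst

lemma integrable_of_bounded01 {α : Type*} [MeasurableSpace α] (μ : Measure α)
    [IsFiniteMeasure μ] {f : α → ℝ} (hf : Measurable f) (h0 : ∀ x, 0 ≤ f x)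
    (h1 : ∀ x, f x ≤ 1) : Integrable f μ := by
  refine (integrable_const (1 : ℝ)).mono' hf.aestronglyMeasurable (ae_of_all _ fun x => ?_)
  rw [Real.norm_eq_abs, abs_of_nonneg (h0 x)]
  exact h1 x

lemma monotone_eq_of_rat {g h : ℝ → ℝ} (hg : Monotone g) (hh : Continuous h)
    (heq : ∀ q : ℚ, g q = h q) (x : ℝ) : g x = h x := by
  have key : ∀ ε : ℝ, 0 < ε → g x ≤ h x + ε ∧ h x - ε ≤ g x := by
    intro ε hε
    obtain ⟨δ, hδ, hδ'⟩ := Metric.continuousAt_iff.1 hh.continuousAt ε hε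
    obtain ⟨q, hq1, hq2⟩ := exists_rat_btwn (lt_add_of_pos_right x hδ)
    obtain ⟨q', hq1', hq2'⟩ := exists_rat_btwn (sub_lt_self x hδ)
    constructor
    · have hd : dist (q : ℝ) x < δ := by
        rw [Real.dist_eq, abs_of_pos (by linarith)]; linarith
      have h2 := hδ' hd
      rw [Real.dist_eq, abs_lt] at h2
      calc g x ≤ g q := hg hq1.le
        _ = h q := heq q
        _ ≤ h x + ε := by linarith [h2.2]
    · have hd : dist (q' : ℝ) x < δ := by
        rw [Real.dist_eq, abs_of_neg (by linarith)]; linarith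
      have h2 := hδ' hd
      rw [Real.dist_eq, abs_lt] at h2
      calc h x - ε ≤ h q' := by linarith [h2.1]
        _ = g q' := (heq q').symm
        _ ≤ g x := hg hq2'.le
  refine le_antisymm ?_ ?_
  · exact le_of_forall_pos_le_add fun ε hε => (key ε hε).1
  · refine le_of_forall_pos_le_add fun ε hε => ?_
    have := (key ε hε).2
    linarith

lemma antitone_eq_of_rat {g h : ℝ → ℝ} (hg : Antitone g) (hh : Continuous h)
    (heq : ∀ q : ℚ, g q = h q) (x : ℝ) : g x = h x := by
  have hg' : Monotone fun t => g (-t) := fun a b hab => hg (neg_le_neg hab)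
  have hh' : Continuous fun t => h (-t) := hh.comp continuous_neg
  have heq' : ∀ q : ℚ, g (-(q : ℝ)) = h (-(q : ℝ)) := by
    intro q
    have := heq (-q)
    push_cast at this
    exact this
  have := monotone_eq_of_rat hg' hh' heq' (-x)
  simpa using this

lemma meas_singleton_of_cont (ν : Measure ℝ) [IsProbabilityMeasure ν]
    (h : Continuous fun z => cdf ν z) (x : ℝ) : ν {x} = 0 := by
  conv_lhs => rw [← measure_cdf ν]
  rw [StieltjesFunction.measure_singleton]
  have hl : Function.leftLim (cdf ν) x = cdf ν x :=
    (monotone_cdf ν).continuousWithinAt_Iio_iff_leftLim_eq.1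
      (h.continuousAt.continuousWithinAt)
  rw [hl, sub_self, ENNReal.ofReal_zero]

lemma prod_singleton_zero (ρ : Measure (ℝ × ℝ)) [IsProbabilityMeasure ρ]
    (h : ∀ z, Continuous fun x => condCDF ρ z x) (x : ℝ) : ρ (univ ×ˢ {x}) = 0 := by
  have hsnd : ρ.snd {x} = 0 := by
    refine meas_singleton_of_cont _ ?_ x
    have hrepr : (fun t => cdf ρ.snd t) = fun t => ∫ z, condCDF ρ z t ∂ρ.fst := by
      funext t
      rw [cdf_eq_real, measureReal_def, Measure.snd_apply measurableSet_Iic, ← Set.univ_prod,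
        integral_condCDF, measureReal_def]
    rw [hrepr]
    refine continuous_of_dominated (fun t => (measurable_condCDF ρ t).aestronglyMeasurable)
      (fun t => ae_of_all _ fun z => ?_) (integrable_const (1 : ℝ)) (ae_of_all _ fun z => h z)
    rw [Real.norm_eq_abs, abs_of_nonneg (condCDF_nonneg _ _ _)]
    exact condCDF_le_one _ _ _
  rw [Set.univ_prod, ← Measure.snd_apply (measurableSet_singleton x)]
  exact hsnd
lemma exists_tau_condCDF {Ω : Type*} {mΩ : MeasurableSpace Ω} (μ : Measure Ω)
    [IsProbabilityMeasure μ]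
    (X Z : Ω → ℝ) (hX : Measurable X) (hZ : Measurable Z)
    (hcont : ∀ z : ℝ, Continuous fun x => condCDF (μ.map fun ω => (Z ω, X ω)) z x)
    {m₁ m₃ : ℝ → ℝ} (hm₁ : StrictMono m₁ ∨ StrictAnti m₁)
    (hm₃ : StrictMono m₃ ∨ StrictAnti m₃) :
    ∃ τ : ℝ → ℝ, Measurable τ ∧ (τ = id ∨ τ = fun u => 1 - u) ∧
      (fun ω => condCDF (μ.map fun ω' => (m₃ (Z ω'), m₁ (X ω'))) (m₃ (Z ω)) (m₁ (X ω)))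
        =ᵐ[μ] fun ω => τ (condCDF (μ.map fun ω' => (Z ω', X ω')) (Z ω) (X ω)) := by
  have hm₃meas : Measurable m₃ := by
    rcases hm₃ with h | h
    exacts [h.monotone.measurable, h.antitone.measurable]
  have hm₃inj : Function.Injective m₃ := by
    rcases hm₃ with h | h
    exacts [h.injective, h.injective]
  have hm₁meas : Measurable m₁ := by
    rcases hm₁ with h | h
    exacts [h.monotone.measurable, h.antitone.measurable]
  have he₃ : MeasurableEmbedding m₃ := hm₃meas.measurableEmbedding hm₃inj
  set ρ₁ : Measure (ℝ × ℝ) := μ.map fun ω => (Z ω, X ω) with hρ₁def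
  set ρ₂ : Measure (ℝ × ℝ) := μ.map fun ω => (m₃ (Z ω), m₁ (X ω)) with hρ₂def
  have hmeas₁ : Measurable fun ω => (Z ω, X ω) := hZ.prodMk hX
  have hmeas₂ : Measurable fun ω => (m₃ (Z ω), m₁ (X ω)) :=
    (hm₃meas.comp hZ).prodMk (hm₁meas.comp hX)
  haveI : IsProbabilityMeasure ρ₁ := Measure.isProbabilityMeasure_map hmeas₁.aemeasurable
  haveI : IsProbabilityMeasure ρ₂ := Measure.isProbabilityMeasure_map hmeas₂.aemeasurable
  haveI : IsProbabilityMeasure (μ.map Z) := Measure.isProbabilityMeasure_map hZ.aemeasurable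
  have hfst₁ : ρ₁.fst = μ.map Z := Measure.fst_map_prodMk hX
  have hfst₂ : ρ₂.fst = (μ.map Z).map m₃ := by
    rw [hρ₂def, Measure.fst_map_prodMk (X := fun ω => m₃ (Z ω)) (Y := fun ω => m₁ (X ω))
      (hm₁meas.comp hX), Measure.map_map hm₃meas hZ]
    rfl
  -- the common set-integral computation on the left side
  have hleft : ∀ (x : ℝ) (s : Set ℝ), MeasurableSet s →
      ∫ z in s, condCDF ρ₂ (m₃ z) (m₁ x) ∂(μ.map Z)
        = (ρ₂ ((m₃ '' s) ×ˢ Iic (m₁ x))).toReal := by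
    intro x s hs
    have himg : MeasurableSet (m₃ '' s) := he₃.measurableSet_image.2 hs
    have h1 : ∫ z in s, condCDF ρ₂ (m₃ z) (m₁ x) ∂(μ.map Z)
        = ∫ w in m₃ '' s, condCDF ρ₂ w (m₁ x) ∂((μ.map Z).map m₃) := by
      rw [he₃.setIntegral_map, Set.preimage_image_eq s hm₃inj]
    rw [h1, ← hfst₂, setIntegral_condCDF ρ₂ (m₁ x) himg, measureReal_def]
  -- integrability helpers
  have hint₂ : ∀ x : ℝ, Integrable (fun z => condCDF ρ₂ (m₃ z) (m₁ x)) (μ.map Z) := by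
    intro x
    exact integrable_of_bounded01 _ ((measurable_condCDF ρ₂ (m₁ x)).comp hm₃meas)
      (fun z => condCDF_nonneg _ _ _) (fun z => condCDF_le_one _ _ _)
  have hint₁ : ∀ x : ℝ, Integrable (fun z => condCDF ρ₁ z x) (μ.map Z) := by
    intro x
    exact integrable_of_bounded01 _ (measurable_condCDF ρ₁ x)
      (fun z => condCDF_nonneg _ _ _) (fun z => condCDF_le_one _ _ _)
  rcases hm₁ with hm₁ | hm₁
  · -- increasing case: τ = id
    refine ⟨id, measurable_id, Or.inl rfl, ?_⟩
    have hx : ∀ x : ℝ, (fun z => condCDF ρ₂ (m₃ z) (m₁ x))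
        =ᵐ[μ.map Z] fun z => condCDF ρ₁ z x := by
      intro x
      refine ae_eq_of_forall_setIntegral_eq_of_sigmaFinite
        (fun s hs _ => (hint₂ x).integrableOn) (fun s hs _ => (hint₁ x).integrableOn) ?_
      intro s hs _
      rw [hleft x s hs, ← hfst₁, setIntegral_condCDF ρ₁ x hs]
      congr 1
      rw [hρ₁def, hρ₂def, Measure.map_apply hmeas₂
        ((he₃.measurableSet_image.2 hs).prod measurableSet_Iic),
        Measure.map_apply hmeas₁ (hs.prod measurableSet_Iic)]
      congr 1
      ext ω
      simp only [Set.mem_preimage, Set.mem_prod, Set.mem_Iic]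
      rw [hm₃inj.mem_set_image, hm₁.le_iff_le]
    have hQ : ∀ᵐ z ∂(μ.map Z), ∀ q : ℚ, condCDF ρ₂ (m₃ z) (m₁ q) = condCDF ρ₁ z q :=
      ae_all_iff.2 fun q => hx q
    have hall : ∀ᵐ z ∂(μ.map Z), ∀ x : ℝ,
        condCDF ρ₂ (m₃ z) (m₁ x) = condCDF ρ₁ z x := by
      filter_upwards [hQ] with z hz x
      exact monotone_eq_of_rat ((condCDF ρ₂ (m₃ z)).mono.comp hm₁.monotone)
        (hcont z) hz x
    have := ae_of_ae_map hZ.aemeasurable hall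
    filter_upwards [this] with ω hω
    simpa using hω (X ω)
  · -- decreasing case: τ = 1 - ·
    refine ⟨fun u => 1 - u, (measurable_const.sub measurable_id), Or.inr rfl, ?_⟩
    have hsing : ∀ x : ℝ, ρ₁ (univ ×ˢ {x}) = 0 := fun x =>
      prod_singleton_zero ρ₁ hcont x
    have hIio : ∀ (x : ℝ) (s : Set ℝ), ρ₁ (s ×ˢ Iio x) = ρ₁ (s ×ˢ Iic x) := by
      intro x s
      refine le_antisymm (measure_mono (Set.prod_mono_right Iio_subset_Iic_self)) ?_
      calc ρ₁ (s ×ˢ Iic x) ≤ ρ₁ (s ×ˢ Iio x ∪ univ ×ˢ {x}) := by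
            refine measure_mono ?_
            rintro ⟨z, t⟩ ⟨hzs, hzt⟩
            rcases lt_or_eq_of_le (Set.mem_Iic.mp hzt) with h | h
            · exact Or.inl ⟨hzs, h⟩
            · exact Or.inr ⟨trivial, h⟩
        _ ≤ ρ₁ (s ×ˢ Iio x) + ρ₁ (univ ×ˢ {x}) := measure_union_le _ _
        _ = ρ₁ (s ×ˢ Iio x) := by rw [hsing x, add_zero]
    have hx : ∀ x : ℝ, (fun z => condCDF ρ₂ (m₃ z) (m₁ x))
        =ᵐ[μ.map Z] fun z => 1 - condCDF ρ₁ z x := by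
      intro x
      refine ae_eq_of_forall_setIntegral_eq_of_sigmaFinite
        (fun s hs _ => (hint₂ x).integrableOn)
        (fun s hs _ => ((integrable_const (1 : ℝ)).sub (hint₁ x)).integrableOn) ?_
      intro s hs _
      have hIci : ρ₁ (s ×ˢ Iic x) + ρ₁ (s ×ˢ Ici x) = (μ.map Z) s := by
        rw [← hIio x s, ← measure_union ?disj (hs.prod measurableSet_Ici)]
        · rw [← Set.prod_union, Iio_union_Ici, ← hfst₁, Measure.fst_apply hs,
            Set.prod_univ]
        case disj =>
          refine Set.disjoint_left.mpr ?_
          rintro ⟨z, t⟩ ⟨_, ht1⟩ ⟨_, ht2⟩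
          exact absurd (Set.mem_Ici.mp ht2) (not_le.mpr (Set.mem_Iio.mp ht1))
      have hpre : ρ₂ ((m₃ '' s) ×ˢ Iic (m₁ x)) = ρ₁ (s ×ˢ Ici x) := by
        rw [hρ₁def, hρ₂def, Measure.map_apply hmeas₂
          ((he₃.measurableSet_image.2 hs).prod measurableSet_Iic),
          Measure.map_apply hmeas₁ (hs.prod measurableSet_Ici)]
        congr 1
        ext ω
        simp only [Set.mem_preimage, Set.mem_prod, Set.mem_Iic, Set.mem_Ici]
        rw [hm₃inj.mem_set_image, hm₁.le_iff_ge]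
      rw [hleft x s hs, hpre]
      have hne1 : ρ₁ (s ×ˢ Iic x) ≠ ⊤ := measure_ne_top _ _
      have hne2 : ρ₁ (s ×ˢ Ici x) ≠ ⊤ := measure_ne_top _ _
      have htr : (ρ₁ (s ×ˢ Iic x)).toReal + (ρ₁ (s ×ˢ Ici x)).toReal
          = ((μ.map Z) s).toReal := by
        rw [← ENNReal.toReal_add hne1 hne2, hIci]
      rw [integral_sub (integrable_const (1 : ℝ)).integrableOn (hint₁ x).integrableOn,
        setIntegral_const, ← hfst₁, setIntegral_condCDF ρ₁ x hs, hfst₁]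
      rw [smul_eq_mul, mul_one]
      simp only [measureReal_def]
      linarith
    have hQ : ∀ᵐ z ∂(μ.map Z), ∀ q : ℚ,
        condCDF ρ₂ (m₃ z) (m₁ q) = 1 - condCDF ρ₁ z q :=
      ae_all_iff.2 fun q => hx q
    have hall : ∀ᵐ z ∂(μ.map Z), ∀ x : ℝ,
        condCDF ρ₂ (m₃ z) (m₁ x) = 1 - condCDF ρ₁ z x := by
      filter_upwards [hQ] with z hz x
      exact antitone_eq_of_rat ((condCDF ρ₂ (m₃ z)).mono.comp_antitone hm₁.antitone)
        (continuous_const.sub (hcont z)) hz x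
    have := ae_of_ae_map hZ.aemeasurable hall
    filter_upwards [this] with ω hω
    exact hω (X ω)

lemma exists_tau_cdf {Ω : Type*} {mΩ : MeasurableSpace Ω} (μ : Measure Ω)
    [IsProbabilityMeasure μ] (Z : Ω → ℝ) (hZ : Measurable Z)
    (hFZ : Continuous fun z => cdf (μ.map Z) z) {m₃ : ℝ → ℝ}
    (hm₃ : StrictMono m₃ ∨ StrictAnti m₃) :
    ∃ τ : ℝ → ℝ, Measurable τ ∧ (τ = id ∨ τ = fun u => 1 - u) ∧
      ∀ ω, cdf (μ.map fun ω' => m₃ (Z ω')) (m₃ (Z ω)) = τ (cdf (μ.map Z) (Z ω)) := by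
  have hm₃meas : Measurable m₃ := by
    rcases hm₃ with h | h
    exacts [h.monotone.measurable, h.antitone.measurable]
  haveI : IsProbabilityMeasure (μ.map Z) := Measure.isProbabilityMeasure_map hZ.aemeasurable
  have hmap : (μ.map fun ω' => m₃ (Z ω')) = (μ.map Z).map m₃ :=
    (Measure.map_map hm₃meas hZ).symm
  haveI : IsProbabilityMeasure ((μ.map Z).map m₃) :=
    Measure.isProbabilityMeasure_map hm₃meas.aemeasurable
  rcases hm₃ with hm₃ | hm₃
  · refine ⟨id, measurable_id, Or.inl rfl, fun ω => ?_⟩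
    have hpre : m₃ ⁻¹' Iic (m₃ (Z ω)) = Iic (Z ω) := by
      ext w; simp [hm₃.le_iff_le]
    rw [hmap, cdf_eq_real, cdf_eq_real, measureReal_def, measureReal_def,
      Measure.map_apply hm₃meas measurableSet_Iic, hpre]
    rfl
  · refine ⟨fun u => 1 - u, measurable_const.sub measurable_id, Or.inr rfl, fun ω => ?_⟩
    have hpre : m₃ ⁻¹' Iic (m₃ (Z ω)) = Ici (Z ω) := by
      ext w; simp [hm₃.le_iff_ge]
    have hsing := meas_singleton_of_cont (μ.map Z) hFZ (Z ω)
    have hIic : (μ.map Z) (Iic (Z ω)) = (μ.map Z) (Iio (Z ω)) := by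
      refine le_antisymm ?_ (measure_mono Iio_subset_Iic_self)
      calc (μ.map Z) (Iic (Z ω)) = (μ.map Z) (Iio (Z ω) ∪ {Z ω}) := by
            rw [Set.Iio_union_right]
        _ ≤ (μ.map Z) (Iio (Z ω)) + (μ.map Z) {Z ω} := measure_union_le _ _
        _ = (μ.map Z) (Iio (Z ω)) := by rw [hsing, add_zero]
    have hsum : (μ.map Z) (Iio (Z ω)) + (μ.map Z) (Ici (Z ω)) = 1 := by
      rw [← measure_union ?disj measurableSet_Ici, Iio_union_Ici, measure_univ]
      case disj =>
        refine Set.disjoint_left.mpr ?_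
        intro t ht1 ht2
        exact absurd (Set.mem_Ici.mp ht2) (not_le.mpr (Set.mem_Iio.mp ht1))
    have htr : ((μ.map Z) (Iio (Z ω))).toReal + ((μ.map Z) (Ici (Z ω))).toReal = 1 := by
      rw [← ENNReal.toReal_add (measure_ne_top _ _) (measure_ne_top _ _), hsum,
        ENNReal.toReal_one]
    rw [hmap, cdf_eq_real, cdf_eq_real, measureReal_def, measureReal_def,
      Measure.map_apply hm₃meas measurableSet_Iic, hpre]
    rw [hIic]
    show _ = 1 - ((μ.map Z) (Iio (Z ω))).toReal
    linarith

lemma continuous_S₀ : Continuous fun p : ℝ × ℝ => S₀ p.1 p.2 := by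
  unfold S₀
  fun_prop

/-- (Theorem 1(3) of the paper.) For any strictly monotone
transformations `m₁, m₂, m₃ : ℝ → ℝ` (each either strictly increasing or strictly
decreasing), `ρ(m₁(X), m₂(Y) | m₃(Z)) = ρ(X, Y | Z)`. -/
theorem rho_invariant_strictly_monotone
    {Ω : Type*} {mΩ : MeasurableSpace Ω}
    (μ : Measure Ω) [IsProbabilityMeasure μ]
    (X Y Z : Ω → ℝ) (hX : Measurable X) (hY : Measurable Y) (hZ : Measurable Z)
    (hXZcont : ∀ z : ℝ, Continuous fun x => condCDF (μ.map fun ω => (Z ω, X ω)) z x)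
    (hYZcont : ∀ z : ℝ, Continuous fun y => condCDF (μ.map fun ω => (Z ω, Y ω)) z y)
    (hFZcont : Continuous fun z => cdf (μ.map Z) z)
    (m₁ m₂ m₃ : ℝ → ℝ)
    (hm₁ : StrictMono m₁ ∨ StrictAnti m₁)
    (hm₂ : StrictMono m₂ ∨ StrictAnti m₂)
    (hm₃ : StrictMono m₃ ∨ StrictAnti m₃)
    (U V W U' V' W' : Ω → ℝ)
    (hU : U = fun ω => condCDF (μ.map fun ω' => (Z ω', X ω')) (Z ω) (X ω))
    (hV : V = fun ω => condCDF (μ.map fun ω' => (Z ω', Y ω')) (Z ω) (Y ω))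
    (hW : W = fun ω => cdf (μ.map Z) (Z ω))
    (hU' : U' = fun ω =>
      condCDF (μ.map fun ω' => (m₃ (Z ω'), m₁ (X ω'))) (m₃ (Z ω)) (m₁ (X ω)))
    (hV' : V' = fun ω =>
      condCDF (μ.map fun ω' => (m₃ (Z ω'), m₂ (Y ω'))) (m₃ (Z ω)) (m₂ (Y ω)))
    (hW' : W' = fun ω => cdf (μ.map fun ω' => m₃ (Z ω')) (m₃ (Z ω)))
    (c₀ : ℝ) (hc₀ : c₀ = (13 * Real.exp (-3) - 40 * Real.exp (-2) + 13 * Real.exp (-1))⁻¹)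
    (ν ν' : Measure (ℝ × ℝ × ℝ))
    (hν : ν = μ.map (fun ω => (U ω, V ω, W ω)))
    (hν' : ν' = μ.map (fun ω => (U' ω, V' ω, W' ω)))
    (ρ ρ' : ℝ)
    (hρ : ρ = c₀ * ∫ p : (ℝ × ℝ × ℝ) × (ℝ × ℝ × ℝ),
      S₀ p.1.1 p.2.1 * S₀ p.1.2.1 p.2.2.1 * Real.exp (-|p.1.2.2 - p.2.2.2|) ∂(ν.prod ν))
    (hρ' : ρ' = c₀ * ∫ p : (ℝ × ℝ × ℝ) × (ℝ × ℝ × ℝ),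
      S₀ p.1.1 p.2.1 * S₀ p.1.2.1 p.2.2.1 * Real.exp (-|p.1.2.2 - p.2.2.2|)
      ∂(ν'.prod ν')) :
    ρ' = ρ := by
  obtain ⟨τ₁, hτ₁m, hτ₁c, hUeq⟩ := exists_tau_condCDF μ X Z hX hZ hXZcont hm₁ hm₃
  obtain ⟨τ₂, hτ₂m, hτ₂c, hVeq⟩ := exists_tau_condCDF μ Y Z hY hZ hYZcont hm₂ hm₃
  obtain ⟨τ₃, hτ₃m, hτ₃c, hWeq⟩ := exists_tau_cdf μ Z hZ hFZcont hm₃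
  have hτ₁S : ∀ a b, S₀ (τ₁ a) (τ₁ b) = S₀ a b := by
    rcases hτ₁c with rfl | rfl
    · intro a b; rfl
    · intro a b; exact S₀_flip a b
  have hτ₂S : ∀ a b, S₀ (τ₂ a) (τ₂ b) = S₀ a b := by
    rcases hτ₂c with rfl | rfl
    · intro a b; rfl
    · intro a b; exact S₀_flip a b
  have hτ₃abs : ∀ a b, |τ₃ a - τ₃ b| = |a - b| := by
    rcases hτ₃c with rfl | rfl
    · intro a b; rfl
    · intro a b; exact abs_one_sub_sub a b
  have hUmeas : Measurable U := by
    rw [hU]; exact (measurable_condCDF_prod _).comp (hZ.prodMk hX)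
  have hVmeas : Measurable V := by
    rw [hV]; exact (measurable_condCDF_prod _).comp (hZ.prodMk hY)
  have hWmeas : Measurable W := by
    rw [hW]; exact (monotone_cdf _).measurable.comp hZ
  have hT : Measurable fun ω => (U ω, V ω, W ω) :=
    hUmeas.prodMk (hVmeas.prodMk hWmeas)
  set σf : ℝ × ℝ × ℝ → ℝ × ℝ × ℝ := fun p => (τ₁ p.1, τ₂ p.2.1, τ₃ p.2.2) with hσf
  have hσ : Measurable σf :=
    (hτ₁m.comp measurable_fst).prodMk
      ((hτ₂m.comp (measurable_fst.comp measurable_snd)).prodMk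
        (hτ₃m.comp (measurable_snd.comp measurable_snd)))
  have hcomp : (fun ω => (U' ω, V' ω, W' ω)) =ᵐ[μ] fun ω => σf (U ω, V ω, W ω) := by
    have hUeq' : U' =ᵐ[μ] fun ω => τ₁ (U ω) := by rw [hU', hU]; exact hUeq
    have hVeq' : V' =ᵐ[μ] fun ω => τ₂ (V ω) := by rw [hV', hV]; exact hVeq
    filter_upwards [hUeq', hVeq'] with ω h1 h2
    have h3 : W' ω = τ₃ (W ω) := by rw [hW', hW]; exact hWeq ω
    simp only [hσf, Prod.mk.injEq]
    exact ⟨h1, h2, h3⟩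
  have hν'map : ν' = ν.map σf := by
    rw [hν', hν, Measure.map_map hσ hT]
    exact Measure.map_congr hcomp
  haveI : IsProbabilityMeasure ν := by
    rw [hν]; exact Measure.isProbabilityMeasure_map hT.aemeasurable
  have hfcont : Continuous fun p : (ℝ × ℝ × ℝ) × (ℝ × ℝ × ℝ) =>
      S₀ p.1.1 p.2.1 * S₀ p.1.2.1 p.2.2.1 * Real.exp (-|p.1.2.2 - p.2.2.2|) := by
    unfold S₀
    fun_prop
  rw [hρ', hρ]
  congr 1
  rw [hν'map, Measure.map_prod_map _ _ hσ hσ,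
    integral_map (hσ.prodMap hσ).aemeasurable hfcont.aestronglyMeasurable]
  refine integral_congr_ae (Filter.Eventually.of_forall fun p => ?_)
  simp only [Prod.map, hσf]
  rw [hτ₁S, hτ₂S, hτ₃abs]
end

section
/- Let X, Y, Z be discrete real-valued random variables (each supported on a countable set), let U_X be a Uniform(0,1) random variable independent of (X,Y,Z), and define U = (1−U_X)·F_{X|Z}(X⁻|Z) + U_X·F_{X|Z}(X|Z). Then X is conditionally independent of Y given Z if and only if U is conditionally independent of Y given Z. -/
open MeasureTheory ProbabilityTheory Set Filter

section Aux

variable {Ω : Type*} {m' : MeasurableSpace Ω} {mΩ : MeasurableSpace Ω}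

/-- The comap of a pair map is generated by intersections of preimages. -/
lemma rcpit_comap_pair_eq_generateFrom {β γ : Type*} [mβ : MeasurableSpace β]
    [mγ : MeasurableSpace γ] (f : Ω → β) (g : Ω → γ) :
    MeasurableSpace.comap (fun ω => (f ω, g ω)) inferInstance =
      MeasurableSpace.generateFrom
        {s | ∃ A B, MeasurableSet A ∧ MeasurableSet B ∧ f ⁻¹' A ∩ g ⁻¹' B = s} := by
  have h1 : (inferInstance : MeasurableSpace (β × γ)) =
      MeasurableSpace.generateFrom
        (Set.image2 (· ×ˢ ·) {s : Set β | MeasurableSet s} {t : Set γ | MeasurableSet t}) :=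
    generateFrom_prod.symm
  rw [h1, MeasurableSpace.comap_generateFrom]
  congr 1
  ext s
  simp only [Set.mem_image, Set.mem_image2, Set.mem_setOf_eq]
  constructor
  · rintro ⟨t, ⟨A, hA, B, hB, rfl⟩, rfl⟩
    exact ⟨A, B, hA, hB, (Set.mk_preimage_prod f g).symm⟩
  · rintro ⟨A, B, hA, hB, rfl⟩
    exact ⟨A ×ˢ B, ⟨A, hA, B, hB, rfl⟩, Set.mk_preimage_prod f g⟩

lemma rcpit_comap_eq_generateFrom {γ : Type*} [mγ : MeasurableSpace γ] (g : Ω → γ) :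
    MeasurableSpace.comap g mγ =
      MeasurableSpace.generateFrom {s | ∃ C, MeasurableSet C ∧ g ⁻¹' C = s} := by
  apply le_antisymm
  · intro s hs
    exact MeasurableSpace.measurableSet_generateFrom (MeasurableSpace.measurableSet_comap.mp hs)
  · refine MeasurableSpace.generateFrom_le ?_
    rintro s ⟨C, hC, rfl⟩
    exact ⟨C, hC, rfl⟩

/-- Pulling an `m'`-measurable set out of a conditional expectation of an indicator. -/
lemma rcpit_condexp_indicator_inter_left
    {μ : Measure Ω} [IsProbabilityMeasure μ]
    (hm' : m' ≤ mΩ) {B s : Set Ω}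
    (hBm' : MeasurableSet[m'] B) (hs : MeasurableSet s) :
    (μ⟦B ∩ s | m'⟧) =ᵐ[μ] B.indicator (μ⟦s | m'⟧) := by
  have h1 : (Set.indicator (B ∩ s) fun _ => (1 : ℝ)) =
      B.indicator (Set.indicator s fun _ => (1 : ℝ)) :=
    (Set.indicator_indicator _ _ _).symm
  rw [h1]
  exact condExp_indicator ((integrable_const (1 : ℝ)).indicator hs) hBm'

/-- Pull-out property: if `W` is independent of `T` and `m' ≤ σ(T)`, then
`E[1_{W ∈ A} 1_{T ∈ E} | m'] = P(W ∈ A) E[1_{T ∈ E} | m']`. -/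
lemma rcpit_condexp_indep_factor {β γ : Type*} [mβ : MeasurableSpace β] [mγ : MeasurableSpace γ]
    {μ : Measure Ω} [IsProbabilityMeasure μ]
    {W : Ω → β} (hW : Measurable W) {T : Ω → γ} (hT : Measurable T)
    (hind : IndepFun W T μ)
    (hm' : m' ≤ mΩ) (hm'T : m' ≤ MeasurableSpace.comap T mγ)
    {A : Set β} (hA : MeasurableSet A) {E : Set γ} (hE : MeasurableSet E) :
    (μ⟦W ⁻¹' A ∩ T ⁻¹' E | m'⟧)
      =ᵐ[μ] fun ω => (μ (W ⁻¹' A)).toReal * (μ⟦T ⁻¹' E | m'⟧) ω := by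
  haveI : SigmaFinite (μ.trim hm') := inferInstance
  set c : ℝ := (μ (W ⁻¹' A)).toReal with hc
  have hTEi : Integrable ((T ⁻¹' E).indicator fun _ => (1 : ℝ)) μ :=
    (integrable_const 1).indicator (hT hE)
  refine (ae_eq_condExp_of_forall_setIntegral_eq hm'
    ((integrable_const (1 : ℝ)).indicator ((hW hA).inter (hT hE)))
    (fun s _ _ => (integrable_condExp.const_mul c).integrableOn)
    (fun s hs _ => ?_) ?_).symm
  · obtain ⟨E', hE', rfl⟩ := MeasurableSpace.measurableSet_comap.mp (hm'T _ hs)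
    have hTE' : MeasurableSet (T ⁻¹' E') := hT hE'
    have hkey : μ (W ⁻¹' A ∩ T ⁻¹' (E ∩ E')) = μ (W ⁻¹' A) * μ (T ⁻¹' (E ∩ E')) :=
      (indepFun_iff_measure_inter_preimage_eq_mul.mp hind) A (E ∩ E') hA (hE.inter hE')
    have hset1 : T ⁻¹' E' ∩ T ⁻¹' E = T ⁻¹' (E ∩ E') := by
      ext x; simp only [Set.mem_inter_iff, Set.mem_preimage]; tauto
    have hset2 : T ⁻¹' E' ∩ (W ⁻¹' A ∩ T ⁻¹' E) = W ⁻¹' A ∩ T ⁻¹' (E ∩ E') := by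
      ext x; simp only [Set.mem_inter_iff, Set.mem_preimage]; tauto
    have hL : ∫ x in T ⁻¹' E', (fun ω => c * (μ⟦T ⁻¹' E | m'⟧) ω) x ∂μ
        = c * (μ (T ⁻¹' (E ∩ E'))).toReal := by
      rw [integral_const_mul]
      congr 1
      rw [setIntegral_condExp hm' hTEi hs, setIntegral_indicator (hT hE), hset1,
        setIntegral_const, smul_eq_mul, mul_one, measureReal_def]
    have hR : ∫ x in T ⁻¹' E', ((W ⁻¹' A ∩ T ⁻¹' E).indicator fun _ => (1 : ℝ)) x ∂μ
        = (μ (W ⁻¹' A ∩ T ⁻¹' (E ∩ E'))).toReal := by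
      rw [setIntegral_indicator ((hW hA).inter (hT hE)), hset2, setIntegral_const,
        smul_eq_mul, mul_one, measureReal_def]
    rw [hL, hR, hkey, ENNReal.toReal_mul]
  · have h1 : AEStronglyMeasurable[m'] (μ⟦T ⁻¹' E | m'⟧) μ :=
      StronglyMeasurable.aestronglyMeasurable stronglyMeasurable_condExp
    have h2 := h1.const_smul c
    refine h2.congr ?_
    filter_upwards with ω
    simp [smul_eq_mul]

variable [StandardBorelSpace Ω] [Nonempty Ω]

/-- If `f ⫫ Y | σ(Z)` then `(f, Z) ⫫ Y | σ(Z)`. -/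
lemma rcpit_condIndepFun_prod_right {β : Type*} [mβ : MeasurableSpace β]
    {μ : Measure Ω} [IsProbabilityMeasure μ]
    {Z : Ω → ℝ} (hZ : Measurable Z) {f : Ω → β} (hf : Measurable f)
    {Y : Ω → ℝ} (hY : Measurable Y)
    (h : CondIndepFun (MeasurableSpace.comap Z inferInstance) hZ.comap_le f Y μ) :
    CondIndepFun (MeasurableSpace.comap Z inferInstance) hZ.comap_le
      (fun ω => (f ω, Z ω)) Y μ := by
  set m' : MeasurableSpace Ω := MeasurableSpace.comap Z inferInstance with hm'def
  have hmul := (condIndepFun_iff_condExp_inter_preimage_eq_mul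
      (m' := m') (hm' := hZ.comap_le) hf hY).mp h
  rw [condIndepFun_iff_condIndep]
  refine CondIndepSets.condIndep ((hf.prodMk hZ).comap_le) hY.comap_le ?_ ?_
    (rcpit_comap_pair_eq_generateFrom f Z) (rcpit_comap_eq_generateFrom Y) ?_
  · rintro s ⟨A, B, hA, hB, rfl⟩ t ⟨A', B', hA', hB', rfl⟩ -
    refine ⟨A ∩ A', B ∩ B', hA.inter hA', hB.inter hB', ?_⟩
    ext x; simp only [Set.mem_inter_iff, Set.mem_preimage]; tauto
  · rintro s ⟨C, hC, rfl⟩ t ⟨C', hC', rfl⟩ -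
    exact ⟨C ∩ C', hC.inter hC', rfl⟩
  · rw [condIndepSets_iff _ _ _ _ ?side1 ?side2]
    case side1 => rintro s ⟨A, B, hA, hB, rfl⟩; exact (hf hA).inter (hZ hB)
    case side2 => rintro t ⟨C, hC, rfl⟩; exact hY hC
    rintro t1 t2 ⟨A, B, hA, hB, rfl⟩ ⟨C, hC, rfl⟩
    have hBm' : MeasurableSet[m'] (Z ⁻¹' B) := ⟨B, hB, rfl⟩
    have hset1 : f ⁻¹' A ∩ Z ⁻¹' B ∩ Y ⁻¹' C = Z ⁻¹' B ∩ (f ⁻¹' A ∩ Y ⁻¹' C) := by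
      ext x; simp only [Set.mem_inter_iff, Set.mem_preimage]; tauto
    have hset2 : f ⁻¹' A ∩ Z ⁻¹' B = Z ⁻¹' B ∩ f ⁻¹' A := Set.inter_comm _ _
    have e1 : (μ⟦f ⁻¹' A ∩ Z ⁻¹' B ∩ Y ⁻¹' C | m'⟧)
        =ᵐ[μ] (Z ⁻¹' B).indicator (μ⟦f ⁻¹' A ∩ Y ⁻¹' C | m'⟧) := by
      rw [hset1]
      exact rcpit_condexp_indicator_inter_left hZ.comap_le hBm' ((hf hA).inter (hY hC))
    have e2 : (μ⟦f ⁻¹' A ∩ Z ⁻¹' B | m'⟧)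
        =ᵐ[μ] (Z ⁻¹' B).indicator (μ⟦f ⁻¹' A | m'⟧) := by
      rw [hset2]
      exact rcpit_condexp_indicator_inter_left hZ.comap_le hBm' (hf hA)
    filter_upwards [e1, e2, hmul A C hA hC] with ω h1 h2 h3
    rw [h1, Pi.mul_apply, h2]
    by_cases hω : ω ∈ Z ⁻¹' B
    · rw [Set.indicator_of_mem hω, Set.indicator_of_mem hω, h3]
    · rw [Set.indicator_of_notMem hω, Set.indicator_of_notMem hω, zero_mul]

/-- Transfer of conditional independence along a.e. equality (left function). -/
lemma rcpit_condIndepFun_congr_left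
    {μ : Measure Ω} [IsProbabilityMeasure μ]
    (hm' : m' ≤ mΩ) {f f' Y : Ω → ℝ}
    (hf : Measurable f) (hf' : Measurable f') (hY : Measurable Y) (hff' : f =ᵐ[μ] f')
    (h : CondIndepFun m' hm' f Y μ) : CondIndepFun m' hm' f' Y μ := by
  rw [condIndepFun_iff_condExp_inter_preimage_eq_mul (hm' := hm') hf' hY]
  rw [condIndepFun_iff_condExp_inter_preimage_eq_mul (hm' := hm') hf hY] at h
  intro s t hs ht
  have hind1 : (Set.indicator (f' ⁻¹' s ∩ Y ⁻¹' t) fun _ => (1 : ℝ))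
      =ᵐ[μ] (Set.indicator (f ⁻¹' s ∩ Y ⁻¹' t) fun _ => (1 : ℝ)) := by
    filter_upwards [hff'] with ω hω
    classical
    rw [Set.indicator_apply, Set.indicator_apply]
    refine if_congr ?_ rfl rfl
    simp [Set.mem_preimage, hω]
  have hind2 : (Set.indicator (f' ⁻¹' s) fun _ => (1 : ℝ))
      =ᵐ[μ] (Set.indicator (f ⁻¹' s) fun _ => (1 : ℝ)) := by
    filter_upwards [hff'] with ω hω
    classical
    rw [Set.indicator_apply, Set.indicator_apply]
    refine if_congr ?_ rfl rfl
    simp [Set.mem_preimage, hω]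
  filter_upwards [condExp_congr_ae (m := m') hind1, condExp_congr_ae (m := m') hind2,
    h s t hs ht] with ω h1 h2 h3
  rw [h1, h2, h3]


/-- If `UX ⫫ (X, Y, Z)` and `X ⫫ Y | σ(Z)`, then `(UX, (X, Z)) ⫫ Y | σ(Z)`. -/
lemma rcpit_condIndepFun_mk_indep {μ : Measure Ω} [IsProbabilityMeasure μ]
    {X Y Z UX : Ω → ℝ} (hX : Measurable X) (hY : Measurable Y) (hZ : Measurable Z)
    (hUX : Measurable UX)
    (hind : IndepFun UX (fun ω => (X ω, Y ω, Z ω)) μ)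
    (hXY : CondIndepFun (MeasurableSpace.comap Z inferInstance) hZ.comap_le X Y μ) :
    CondIndepFun (MeasurableSpace.comap Z inferInstance) hZ.comap_le
      (fun ω => (UX ω, (X ω, Z ω))) Y μ := by
  have hTm : Measurable (fun ω => (X ω, Y ω, Z ω)) := hX.prodMk (hY.prodMk hZ)
  have hVm : Measurable (fun ω => (X ω, Z ω)) := hX.prodMk hZ
  have hm'T : MeasurableSpace.comap Z inferInstance ≤
      MeasurableSpace.comap (fun ω => (X ω, Y ω, Z ω)) inferInstance := by
    have hZT : Z = (fun p : ℝ × ℝ × ℝ => p.2.2) ∘ (fun ω => (X ω, Y ω, Z ω)) := rfl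
    calc MeasurableSpace.comap Z inferInstance
        = MeasurableSpace.comap ((fun p : ℝ × ℝ × ℝ => p.2.2) ∘ (fun ω => (X ω, Y ω, Z ω)))
          inferInstance := by rw [← hZT]
      _ = MeasurableSpace.comap (fun ω => (X ω, Y ω, Z ω))
          (MeasurableSpace.comap (fun p : ℝ × ℝ × ℝ => p.2.2) inferInstance) :=
        MeasurableSpace.comap_comp.symm
      _ ≤ MeasurableSpace.comap (fun ω => (X ω, Y ω, Z ω)) inferInstance :=
        MeasurableSpace.comap_mono (measurable_snd.snd).comap_le
  have hVY := rcpit_condIndepFun_prod_right hZ hX hY hXY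
  have hmulVY := (condIndepFun_iff_condExp_inter_preimage_eq_mul
      (m' := MeasurableSpace.comap Z inferInstance) (hm' := hZ.comap_le) hVm hY).mp hVY
  rw [condIndepFun_iff_condIndep]
  refine CondIndepSets.condIndep ((hUX.prodMk hVm).comap_le) hY.comap_le ?_ ?_
    (rcpit_comap_pair_eq_generateFrom UX (fun ω => (X ω, Z ω)))
    (rcpit_comap_eq_generateFrom Y) ?_
  · rintro s ⟨A, D, hA, hD, rfl⟩ t ⟨A', D', hA', hD', rfl⟩ -
    refine ⟨A ∩ A', D ∩ D', hA.inter hA', hD.inter hD', ?_⟩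
    ext x; simp only [Set.mem_inter_iff, Set.mem_preimage]; tauto
  · rintro s ⟨C, hC, rfl⟩ t ⟨C', hC', rfl⟩ -
    exact ⟨C ∩ C', hC.inter hC', rfl⟩
  · rw [condIndepSets_iff _ _ _ _ ?side1 ?side2]
    case side1 => rintro s ⟨A, D, hA, hD, rfl⟩; exact (hUX hA).inter (hVm hD)
    case side2 => rintro t ⟨C, hC, rfl⟩; exact hY hC
    rintro t1 t2 ⟨A, D, hA, hD, rfl⟩ ⟨C, hC, rfl⟩
    have g1 : Measurable fun p : ℝ × ℝ × ℝ => (p.1, p.2.2) :=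
      measurable_fst.prodMk measurable_snd.snd
    have g2 : Measurable fun p : ℝ × ℝ × ℝ => p.2.1 := measurable_snd.fst
    have key1 : (μ⟦UX ⁻¹' A ∩ ((fun ω => (X ω, Z ω)) ⁻¹' D ∩ Y ⁻¹' C) |
          MeasurableSpace.comap Z inferInstance⟧)
        =ᵐ[μ] fun ω => (μ (UX ⁻¹' A)).toReal *
          (μ⟦(fun ω => (X ω, Z ω)) ⁻¹' D ∩ Y ⁻¹' C |
            MeasurableSpace.comap Z inferInstance⟧) ω :=
      rcpit_condexp_indep_factor (T := fun ω => (X ω, Y ω, Z ω)) hUX hTm hind hZ.comap_le hm'T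
        hA ((g1 hD).inter (g2 hC))
    have key2 : (μ⟦UX ⁻¹' A ∩ (fun ω => (X ω, Z ω)) ⁻¹' D |
          MeasurableSpace.comap Z inferInstance⟧)
        =ᵐ[μ] fun ω => (μ (UX ⁻¹' A)).toReal *
          (μ⟦(fun ω => (X ω, Z ω)) ⁻¹' D | MeasurableSpace.comap Z inferInstance⟧) ω :=
      rcpit_condexp_indep_factor (T := fun ω => (X ω, Y ω, Z ω)) hUX hTm hind hZ.comap_le hm'T
        hA (g1 hD)
    have hassoc : UX ⁻¹' A ∩ (fun ω => (X ω, Z ω)) ⁻¹' D ∩ Y ⁻¹' C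
        = UX ⁻¹' A ∩ ((fun ω => (X ω, Z ω)) ⁻¹' D ∩ Y ⁻¹' C) := Set.inter_assoc _ _ _
    rw [hassoc]
    filter_upwards [key1, key2, hmulVY D C hD hC] with ω h1 h2 h3
    rw [h1, Pi.mul_apply, h2, h3]
    ring

end Aux

section Kernel

/-- The kernel on `ℝ` built from the conditional CDF of a measure on `ℝ × ℝ`. -/
noncomputable def rcpitKernel (ρ : Measure (ℝ × ℝ)) : Kernel ℝ ℝ :=
  ⟨fun a => (condCDF ρ a).measure, measurable_measure_condCDF ρ⟩

lemma rcpitKernel_apply (ρ : Measure (ℝ × ℝ)) (a : ℝ) :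
    rcpitKernel ρ a = (condCDF ρ a).measure := rfl

instance (ρ : Measure (ℝ × ℝ)) : IsMarkovKernel (rcpitKernel ρ) := by
  constructor
  intro a
  rw [rcpitKernel_apply]
  infer_instance

lemma rcpitKernel_Iic (ρ : Measure (ℝ × ℝ)) (a x : ℝ) :
    rcpitKernel ρ a (Iic x) = ENNReal.ofReal (condCDF ρ a x) := by
  rw [rcpitKernel_apply, measure_condCDF_Iic]

lemma rcpit_condCDF_eq (ρ : Measure (ℝ × ℝ)) (a x : ℝ) :
    condCDF ρ a x = (rcpitKernel ρ a (Iic x)).toReal := by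
  rw [rcpitKernel_Iic, ENNReal.toReal_ofReal (condCDF_nonneg ρ a x)]

lemma rcpit_leftLim_eq (ρ : Measure (ℝ × ℝ)) (a x : ℝ) :
    Function.leftLim (fun x' => condCDF ρ a x') x
      = condCDF ρ a x - (rcpitKernel ρ a {x}).toReal := by
  have h1 : rcpitKernel ρ a {x}
      = ENNReal.ofReal (condCDF ρ a x - Function.leftLim (⇑(condCDF ρ a)) x) := by
    rw [rcpitKernel_apply]; exact (condCDF ρ a).measure_singleton x
  have h2 : 0 ≤ condCDF ρ a x - Function.leftLim (⇑(condCDF ρ a)) x :=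
    sub_nonneg.mpr ((condCDF ρ a).mono.leftLim_le le_rfl)
  rw [h1, ENNReal.toReal_ofReal h2]
  ring_nf

/-- The conditional CDF kernel, reindexed by the first coordinate of a pair. -/
noncomputable def rcpitKernel2 (ρ : Measure (ℝ × ℝ)) : Kernel (ℝ × ℝ) ℝ :=
  (rcpitKernel ρ).comap (Prod.fst : ℝ × ℝ → ℝ) measurable_fst

instance (ρ : Measure (ℝ × ℝ)) : IsMarkovKernel (rcpitKernel2 ρ) := by
  unfold rcpitKernel2; infer_instance

lemma rcpitKernel2_apply (ρ : Measure (ℝ × ℝ)) (p : ℝ × ℝ) :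
    rcpitKernel2 ρ p = rcpitKernel ρ p.1 :=
  Kernel.comap_apply _ _ _

/-- Joint measurability of `(a, x) ↦ κ a (Iic x)` for the conditional CDF kernel. -/
lemma rcpit_measurable_Iic (ρ : Measure (ℝ × ℝ)) :
    Measurable fun p : ℝ × ℝ => rcpitKernel ρ p.1 (Iic p.2) := by
  have ht : MeasurableSet {q : (ℝ × ℝ) × ℝ | q.2 ≤ q.1.2} :=
    measurableSet_le measurable_snd measurable_fst.snd
  have h : Measurable fun p : ℝ × ℝ =>
      rcpitKernel2 ρ p (Prod.mk p ⁻¹' {q : (ℝ × ℝ) × ℝ | q.2 ≤ q.1.2}) :=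
    Kernel.measurable_kernel_prodMk_left ht
  have heq : (fun p : ℝ × ℝ =>
      rcpitKernel2 ρ p (Prod.mk p ⁻¹' {q : (ℝ × ℝ) × ℝ | q.2 ≤ q.1.2}))
        = fun p : ℝ × ℝ => rcpitKernel ρ p.1 (Iic p.2) := by
    funext p
    rw [rcpitKernel2_apply]
    congr 1
  rw [heq] at h
  exact h

/-- Joint measurability of `(a, x) ↦ κ a {x}` for the conditional CDF kernel. -/
lemma rcpit_measurable_singleton (ρ : Measure (ℝ × ℝ)) :
    Measurable fun p : ℝ × ℝ => rcpitKernel ρ p.1 {p.2} := by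
  have ht : MeasurableSet {q : (ℝ × ℝ) × ℝ | q.2 = q.1.2} :=
    measurableSet_eq_fun measurable_snd measurable_fst.snd
  have h : Measurable fun p : ℝ × ℝ =>
      rcpitKernel2 ρ p (Prod.mk p ⁻¹' {q : (ℝ × ℝ) × ℝ | q.2 = q.1.2}) :=
    Kernel.measurable_kernel_prodMk_left ht
  have heq : (fun p : ℝ × ℝ =>
      rcpitKernel2 ρ p (Prod.mk p ⁻¹' {q : (ℝ × ℝ) × ℝ | q.2 = q.1.2}))
        = fun p : ℝ × ℝ => rcpitKernel ρ p.1 {p.2} := by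
    funext p
    rw [rcpitKernel2_apply]
    congr 1
  rw [heq] at h
  exact h

/-- Disintegration: the conditional CDF kernel disintegrates `ρ`. -/
lemma rcpit_disintegration (ρ : Measure (ℝ × ℝ)) [IsFiniteMeasure ρ] :
    ρ.fst ⊗ₘ rcpitKernel ρ = ρ := by
  have hD : MeasurableSpace.generateFrom (Set.range (Iic : ℝ → Set ℝ))
      = (inferInstance : MeasurableSpace ℝ) := by
    rw [BorelSpace.measurable_eq (α := ℝ)]
    exact (borel_eq_generateFrom_Iic ℝ).symm
  have hC : MeasurableSpace.generateFrom {s : Set ℝ | MeasurableSet s}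
      = (inferInstance : MeasurableSpace ℝ) := MeasurableSpace.generateFrom_measurableSet
  have h2C : IsCountablySpanning {s : Set ℝ | MeasurableSet s} :=
    isCountablySpanning_measurableSet
  have h2D : IsCountablySpanning (Set.range (Iic : ℝ → Set ℝ)) := by
    refine ⟨fun n => Iic n, fun n => Set.mem_range_self _, ?_⟩
    ext x
    simp only [Set.mem_iUnion, Set.mem_Iic, Set.mem_univ, iff_true]
    obtain ⟨n, hn⟩ := exists_nat_ge x
    exact ⟨n, hn⟩
  refine ext_of_generate_finite _ (generateFrom_eq_prod hC hD h2C h2D).symm ?_ ?_ ?_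
  · exact IsPiSystem.prod MeasurableSpace.isPiSystem_measurableSet isPiSystem_Iic
  · rintro s ⟨A, hA, t, ⟨x, rfl⟩, rfl⟩
    have hA' : MeasurableSet A := hA
    rw [Measure.compProd_apply_prod hA' measurableSet_Iic]
    have : ∀ z, rcpitKernel ρ z (Iic x) = ENNReal.ofReal (condCDF ρ z x) :=
      fun z => rcpitKernel_Iic ρ z x
    simp_rw [this]
    exact setLIntegral_condCDF ρ x hA'
  · rw [Measure.compProd_apply_univ, Measure.fst_univ]

/-- The set of pairs `(z, x)` with `x` in a countable set where the conditional kernel gives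
zero mass to `{x}` is `ρ`-null. -/
lemma rcpit_jump_bad_null (ρ : Measure (ℝ × ℝ)) [IsFiniteMeasure ρ] {S : Set ℝ}
    (hSc : S.Countable) :
    ρ (⋃ x ∈ S, ({z | rcpitKernel ρ z {x} = 0} ×ˢ ({x} : Set ℝ))) = 0 := by
  have hmx : ∀ x : ℝ, MeasurableSet {z | rcpitKernel ρ z {x} = 0} := fun x =>
    ((rcpitKernel ρ).measurable_coe (measurableSet_singleton x)) (measurableSet_singleton 0)
  set B : Set (ℝ × ℝ) := ⋃ x ∈ S, ({z | rcpitKernel ρ z {x} = 0} ×ˢ ({x} : Set ℝ)) with hBdef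
  have hBm : MeasurableSet B :=
    MeasurableSet.biUnion hSc (fun x _ => (hmx x).prod (measurableSet_singleton x))
  rw [← rcpit_disintegration ρ, Measure.compProd_apply hBm]
  have hz : ∀ z : ℝ, rcpitKernel ρ z (Prod.mk z ⁻¹' B) = 0 := by
    intro z
    rw [hBdef, Set.preimage_iUnion₂]
    rw [measure_biUnion_null_iff hSc]
    intro x hx
    by_cases h0 : rcpitKernel ρ z {x} = 0
    · refine measure_mono_null ?_ h0
      intro y hy
      simp only [Set.mem_preimage, Set.prodMk_mem_set_prod_eq, Set.mem_setOf_eq,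
        Set.mem_singleton_iff] at hy
      exact hy.2
    · have : Prod.mk z ⁻¹' ({z' | rcpitKernel ρ z' {x} = 0} ×ˢ ({x} : Set ℝ)) = ∅ := by
        ext y
        simp only [Set.mem_preimage, Set.prodMk_mem_set_prod_eq, Set.mem_setOf_eq,
          Set.mem_singleton_iff, Set.mem_empty_iff_false, iff_false, not_and]
        intro h; exact absurd h h0
      rw [this, measure_empty]
  simp [hz]

end Kernel

/-- Let `X, Y, Z` be discrete real random variables, `U_X` a
`Uniform(0,1)` random variable independent of `(X,Y,Z)`, and
`U = (1−U_X) F_{X|Z}(X⁻|Z) + U_X F_{X|Z}(X|Z)` the randomized conditional probability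
integral transform. Then `X ⫫ Y | Z` if and only if `U ⫫ Y | Z`. -/
theorem discrete_condIndep_iff_transform_condIndep
    {Ω : Type*} {mΩ : MeasurableSpace Ω} [StandardBorelSpace Ω] [Nonempty Ω]
    (μ : Measure Ω) [IsProbabilityMeasure μ]
    (X Y Z : Ω → ℝ) (hX : Measurable X) (hY : Measurable Y) (hZ : Measurable Z)
    -- `X`, `Y`, `Z` are discrete (supported on countable sets)
    (hXd : ∃ S : Set ℝ, S.Countable ∧ μ (X ⁻¹' S) = 1)
    (hYd : ∃ S : Set ℝ, S.Countable ∧ μ (Y ⁻¹' S) = 1)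
    (hZd : ∃ S : Set ℝ, S.Countable ∧ μ (Z ⁻¹' S) = 1)
    (UX : Ω → ℝ) (hUX : Measurable UX)
    (hUXu : μ.map UX = volume.restrict (Ioo (0 : ℝ) 1))
    (hind : IndepFun UX (fun ω => (X ω, Y ω, Z ω)) μ)
    (U : Ω → ℝ)
    (hU : U = fun ω =>
      (1 - UX ω) *
          Function.leftLim (fun x => condCDF (μ.map fun ω' => (Z ω', X ω')) (Z ω) x) (X ω) +
        UX ω * condCDF (μ.map fun ω' => (Z ω', X ω')) (Z ω) (X ω)) :
    CondIndepFun (MeasurableSpace.comap Z inferInstance) hZ.comap_le X Y μ ↔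
      CondIndepFun (MeasurableSpace.comap Z inferInstance) hZ.comap_le U Y μ := by
  classical
  set ρ : Measure (ℝ × ℝ) := μ.map (fun ω' => (Z ω', X ω')) with hρdef
  haveI : IsProbabilityMeasure ρ := Measure.isProbabilityMeasure_map (hZ.prodMk hX).aemeasurable
  have hFj : Measurable fun p : ℝ × ℝ => (rcpitKernel ρ p.1 (Iic p.2)).toReal :=
    (rcpit_measurable_Iic ρ).ennreal_toReal
  have hJ : Measurable fun p : ℝ × ℝ => (rcpitKernel ρ p.1 {p.2}).toReal :=
    (rcpit_measurable_singleton ρ).ennreal_toReal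
  -- pointwise formula for U in terms of the kernel
  have hUfor : ∀ ω, U ω = (1 - UX ω) * ((rcpitKernel ρ (Z ω) (Iic (X ω))).toReal
        - (rcpitKernel ρ (Z ω) {X ω}).toReal)
      + UX ω * (rcpitKernel ρ (Z ω) (Iic (X ω))).toReal := by
    intro ω
    rw [hU]
    show (1 - UX ω) * Function.leftLim (fun x => condCDF ρ (Z ω) x) (X ω)
        + UX ω * condCDF ρ (Z ω) (X ω) = _
    rw [rcpit_leftLim_eq ρ (Z ω) (X ω), rcpit_condCDF_eq ρ (Z ω) (X ω)]
  have hUm : Measurable U := by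
    have hform : U = fun ω => (1 - UX ω) *
        ((fun p : ℝ × ℝ => (rcpitKernel ρ p.1 (Iic p.2)).toReal) (Z ω, X ω)
          - (fun p : ℝ × ℝ => (rcpitKernel ρ p.1 {p.2}).toReal) (Z ω, X ω))
      + UX ω * (fun p : ℝ × ℝ => (rcpitKernel ρ p.1 (Iic p.2)).toReal) (Z ω, X ω) := by
      funext ω; exact hUfor ω
    rw [hform]
    exact ((measurable_const.sub hUX).mul
        ((hFj.comp (hZ.prodMk hX)).sub (hJ.comp (hZ.prodMk hX)))).add
      (hUX.mul (hFj.comp (hZ.prodMk hX)))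
  constructor
  · -- forward direction
    intro hXY
    have hPair := rcpit_condIndepFun_mk_indep hX hY hZ hUX hind hXY
    have hswap : Measurable fun q : ℝ × ℝ × ℝ => (q.2.2, q.2.1) :=
      (measurable_snd.snd).prodMk (measurable_snd.fst)
    have hφ : Measurable fun q : ℝ × ℝ × ℝ =>
        (1 - q.1) * ((rcpitKernel ρ q.2.2 (Iic q.2.1)).toReal
            - (rcpitKernel ρ q.2.2 {q.2.1}).toReal)
          + q.1 * (rcpitKernel ρ q.2.2 (Iic q.2.1)).toReal :=
      ((measurable_const.sub measurable_fst).mul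
          ((hFj.comp hswap).sub (hJ.comp hswap))).add
        (measurable_fst.mul (hFj.comp hswap))
    have hcomp := hPair.comp hφ measurable_id
    have hcompeq : ((fun q : ℝ × ℝ × ℝ =>
        (1 - q.1) * ((rcpitKernel ρ q.2.2 (Iic q.2.1)).toReal
            - (rcpitKernel ρ q.2.2 {q.2.1}).toReal)
          + q.1 * (rcpitKernel ρ q.2.2 (Iic q.2.1)).toReal)
        ∘ (fun ω => (UX ω, (X ω, Z ω)))) = U := by
      funext ω
      rw [Function.comp_apply, hUfor ω]
    rw [hcompeq, Function.id_comp] at hcomp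
    exact hcomp
  · -- backward direction
    intro hUY
    have hPair : CondIndepFun (MeasurableSpace.comap Z inferInstance) hZ.comap_le
        (fun ω => (U ω, Z ω)) Y μ := rcpit_condIndepFun_prod_right hZ hUm hY hUY
    obtain ⟨S, hSc, hSμ⟩ := hXd
    have hSne : S.Nonempty := by
      rcases S.eq_empty_or_nonempty with h | h
      · exfalso
        rw [h, Set.preimage_empty, measure_empty] at hSμ
        exact zero_ne_one hSμ
      · exact h
    obtain ⟨e, he⟩ := hSc.exists_eq_range hSne
    -- the candidate sets for inversion
    set G : ℕ → Set (ℝ × ℝ) := fun n => {p : ℝ × ℝ |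
      (rcpitKernel ρ p.2 (Iic (e n))).toReal - (rcpitKernel ρ p.2 {e n}).toReal < p.1
        ∧ p.1 ≤ (rcpitKernel ρ p.2 (Iic (e n))).toReal} with hGdef
    have hGm : ∀ n, MeasurableSet (G n) := by
      intro n
      have h1 : Measurable fun p : ℝ × ℝ =>
          (rcpitKernel ρ p.2 (Iic (e n))).toReal - (rcpitKernel ρ p.2 {e n}).toReal :=
        ((((rcpitKernel ρ).measurable_coe measurableSet_Iic).comp
            measurable_snd).ennreal_toReal).sub
          ((((rcpitKernel ρ).measurable_coe (measurableSet_singleton _)).comp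
            measurable_snd).ennreal_toReal)
      have h2 : Measurable fun p : ℝ × ℝ => (rcpitKernel ρ p.2 (Iic (e n))).toReal :=
        (((rcpitKernel ρ).measurable_coe measurableSet_Iic).comp measurable_snd).ennreal_toReal
      exact (measurableSet_lt h1 measurable_fst).inter (measurableSet_le measurable_fst h2)
    set nsel : ℝ × ℝ → ℕ := fun p => sInf {n | p ∈ G n} with hnsel
    have hnselm : Measurable nsel := by
      apply measurable_to_countable'
      intro m
      match m with
      | 0 =>
        have hpre : nsel ⁻¹' {0} = G 0 ∪ (⋂ n, (G n)ᶜ) := by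
          ext p
          simp only [Set.mem_preimage, Set.mem_singleton_iff, hnsel, Nat.sInf_eq_zero,
            Set.mem_union, Set.mem_iInter, Set.mem_compl_iff, Set.mem_setOf_eq]
          constructor
          · rintro (h | h)
            · exact Or.inl h
            · refine Or.inr (fun n hn => ?_)
              rw [Set.eq_empty_iff_forall_notMem] at h
              exact h n hn
          · rintro (h | h)
            · exact Or.inl h
            · exact Or.inr (Set.eq_empty_iff_forall_notMem.mpr h)
        rw [hpre]
        exact (hGm 0).union (MeasurableSet.iInter fun n => (hGm n).compl)
      | (m + 1) =>
        have hpre : nsel ⁻¹' {m + 1} = G (m + 1) ∩ (⋂ k, ⋂ (_ : k < m + 1), (G k)ᶜ) := by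
          ext p
          simp only [Set.mem_preimage, Set.mem_singleton_iff, hnsel, Set.mem_inter_iff,
            Set.mem_iInter, Set.mem_compl_iff, Set.mem_setOf_eq]
          constructor
          · intro h
            have hne : {n | p ∈ G n}.Nonempty := by
              by_contra hcon
              rw [Set.not_nonempty_iff_eq_empty] at hcon
              rw [hcon, Nat.sInf_empty] at h
              omega
            have hmem := Nat.sInf_mem hne
            rw [h] at hmem
            refine ⟨hmem, fun k hk hkG => ?_⟩
            have hle := Nat.sInf_le (show k ∈ {n | p ∈ G n} from hkG)
            omega
          · rintro ⟨hmem, hbelow⟩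
            have h1 : sInf {n | p ∈ G n} ≤ m + 1 :=
              Nat.sInf_le (show m + 1 ∈ {n | p ∈ G n} from hmem)
            have h2 : ¬ sInf {n | p ∈ G n} < m + 1 := by
              intro hlt
              have hmem2 := Nat.sInf_mem (⟨m + 1, hmem⟩ : {n | p ∈ G n}.Nonempty)
              exact hbelow _ hlt hmem2
            omega
        rw [hpre]
        exact (hGm (m + 1)).inter
          (MeasurableSet.iInter fun k => MeasurableSet.iInter fun _ => (hGm k).compl)
    have hgm : Measurable (fun p : ℝ × ℝ => e (nsel p)) :=
      measurable_from_top.comp hnselm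
    -- almost sure events
    have E1 : ∀ᵐ ω ∂μ, UX ω ∈ Ioo (0 : ℝ) 1 := by
      have h1 : μ (UX ⁻¹' (Ioo 0 1)) = 1 := by
        rw [← Measure.map_apply hUX measurableSet_Ioo, hUXu,
          Measure.restrict_apply measurableSet_Ioo]
        simp
      have h2 : μ ((UX ⁻¹' (Ioo 0 1))ᶜ) = 0 := by
        rw [measure_compl (hUX measurableSet_Ioo) (measure_ne_top μ _), h1, measure_univ]
        simp
      rw [ae_iff]
      exact h2
    have E2 : ∀ᵐ ω ∂μ, X ω ∈ S := by
      have h2 : μ ((X ⁻¹' S)ᶜ) = 0 := by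
        rw [measure_compl (hX hSc.measurableSet) (measure_ne_top μ _), hSμ, measure_univ]
        simp
      rw [ae_iff]
      exact h2
    have hBm : MeasurableSet (⋃ x ∈ S, ({z | rcpitKernel ρ z {x} = 0} ×ˢ ({x} : Set ℝ))) :=
      MeasurableSet.biUnion hSc (fun x _ =>
        (((rcpitKernel ρ).measurable_coe (measurableSet_singleton x))
          (measurableSet_singleton 0)).prod (measurableSet_singleton x))
    have E3 : ∀ᵐ ω ∂μ, (Z ω, X ω) ∉
        (⋃ x ∈ S, ({z | rcpitKernel ρ z {x} = 0} ×ˢ ({x} : Set ℝ))) := by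
      have hB0 : ρ (⋃ x ∈ S, ({z | rcpitKernel ρ z {x} = 0} ×ˢ ({x} : Set ℝ))) = 0 :=
        rcpit_jump_bad_null ρ hSc
      have h2 : μ ((fun ω => (Z ω, X ω)) ⁻¹'
          (⋃ x ∈ S, ({z | rcpitKernel ρ z {x} = 0} ×ˢ ({x} : Set ℝ)))) = 0 := by
        rw [← Measure.map_apply (hZ.prodMk hX) hBm, ← hρdef]
        exact hB0
      rw [ae_iff]
      simp only [not_not]
      exact h2
    -- a.e. recovery of X
    have hrec : X =ᵐ[μ] fun ω => e (nsel (U ω, Z ω)) := by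
      filter_upwards [E1, E2, E3] with ω h1 h2 h3
      have hjumpne : rcpitKernel ρ (Z ω) {X ω} ≠ 0 := by
        intro h0
        exact h3 (Set.mem_biUnion h2 ⟨h0, rfl⟩)
      have hjpos : 0 < (rcpitKernel ρ (Z ω) {X ω}).toReal :=
        ENNReal.toReal_pos hjumpne (measure_ne_top _ _)
      -- bounds on U ω
      have hUle : U ω ≤ (rcpitKernel ρ (Z ω) (Iic (X ω))).toReal := by
        rw [hUfor ω]
        have h4 : 0 ≤ 1 - UX ω := by linarith [h1.2]
        nlinarith [mul_nonneg h4 hjpos.le]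
      have hUgt : (rcpitKernel ρ (Z ω) (Iic (X ω))).toReal
          - (rcpitKernel ρ (Z ω) {X ω}).toReal < U ω := by
        rw [hUfor ω]
        nlinarith [mul_pos h1.1 hjpos]
      -- monotonicity facts
      have hFmono : ∀ b x : ℝ, b < x →
          (rcpitKernel ρ (Z ω) (Iic b)).toReal ≤ (rcpitKernel ρ (Z ω) (Iic x)).toReal
            - (rcpitKernel ρ (Z ω) {x}).toReal := by
        intro b x hbx
        rw [← rcpit_condCDF_eq, ← rcpit_condCDF_eq, ← rcpit_leftLim_eq]
        exact (condCDF ρ (Z ω)).mono.le_leftLim hbx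
      -- X ω is in the range of e
      have hx : ∃ n, e n = X ω := by
        rw [he] at h2
        obtain ⟨n, hn⟩ := h2
        exact ⟨n, hn⟩
      obtain ⟨n0, hn0⟩ := hx
      have hmemn0 : (U ω, Z ω) ∈ G n0 := by
        rw [hGdef]
        refine ⟨?_, ?_⟩
        · simpa only [hn0] using hUgt
        · simpa only [hn0] using hUle
      have hne : {n | (U ω, Z ω) ∈ G n}.Nonempty := ⟨n0, hmemn0⟩
      have hmm := Nat.sInf_mem hne
      set m := sInf {n | (U ω, Z ω) ∈ G n}
      have hGmem : (rcpitKernel ρ (Z ω) (Iic (e m))).toReal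
            - (rcpitKernel ρ (Z ω) {e m}).toReal < U ω
          ∧ U ω ≤ (rcpitKernel ρ (Z ω) (Iic (e m))).toReal := hmm
      -- conclude e m = X ω
      have : e m = X ω := by
        rcases lt_trichotomy (e m) (X ω) with hlt | heq | hgt
        · exfalso
          have hb := hFmono (e m) (X ω) hlt
          linarith [hGmem.2, hUgt]
        · exact heq
        · exfalso
          have hb := hFmono (X ω) (e m) hgt
          linarith [hGmem.1, hUle]
      exact this.symm
    -- conclude
    have hcomp := hPair.comp hgm measurable_id
    have hcompeq : ((fun p : ℝ × ℝ => e (nsel p)) ∘ (fun ω => (U ω, Z ω)))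
        = fun ω => e (nsel (U ω, Z ω)) := rfl
    rw [hcompeq, Function.id_comp] at hcomp
    exact rcpit_condIndepFun_congr_left hZ.comap_le
      (hgm.comp (hUm.prodMk hZ)) hX hY hrec.symm hcomp
end
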